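/- arXiv:2602.13467 — 5 statements merged into one kernel-verified Lean document; each statement's English description precedes it below -/
import Mathlib

section
/- Let P be a finite poset and let P₁, P₂ ⊆ P be subposets such that (1) P₁ ∪ P₂ = P; (2) P₁ ∩ P₂ is contained in the set of minimal elements of P or contained in the set of maximal elements of P; and (3) whenever x ∈ P₁ and y ∈ P₂ satisfy x ≺ y or y ≺ x, then x ∈ P₁ ∩ P₂ or y ∈ P₁ ∩ P₂. Then the nilpotent Lie poset algebra g^≺(P) is isomorphic as a Lie algebra to the direct sum g^≺(P₁) ⊕ g^≺(P₂). -/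
noncomputable section

attribute [local instance 100] LieRing.ofAssociativeRing

/-- The nilpotent Lie poset algebra `g^≺(P)` of a finite poset: the Lie subalgebra of matrices
indexed by `P` spanned by the `E_{p,q}` with `p ≺ q`. -/
def posetAlg (α : Type*) [Fintype α] [DecidableEq α] [PartialOrder α] :
    LieSubalgebra ℂ (Matrix α α ℂ) :=
  LieSubalgebra.lieSpan ℂ _ {M | ∃ p q : α, p < q ∧ M = Matrix.single p q 1}

section Prod

variable (L₁ L₂ : Type*) [LieRing L₁] [LieRing L₂] [LieAlgebra ℂ L₁] [LieAlgebra ℂ L₂]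

/-- Componentwise bracket on the direct sum `L₁ ⊕ L₂`. -/
instance prodBracket : Bracket (L₁ × L₂) (L₁ × L₂) :=
  ⟨fun x y => (⁅x.1, y.1⁆, ⁅x.2, y.2⁆)⟩

/-- The direct sum of two Lie rings, with componentwise bracket. -/
instance prodLieRing : LieRing (L₁ × L₂) where
  add_lie x y z := by rw [Prod.ext_iff]; constructor <;> exact add_lie _ _ _
  lie_add x y z := by rw [Prod.ext_iff]; constructor <;> exact lie_add _ _ _
  lie_self x := by rw [Prod.ext_iff]; constructor <;> exact lie_self _
  leibniz_lie x y z := by rw [Prod.ext_iff]; constructor <;> exact leibniz_lie _ _ _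

/-- The direct sum of two Lie algebras. -/
instance prodLieAlgebra : LieAlgebra ℂ (L₁ × L₂) where
  lie_smul t x y := by rw [Prod.ext_iff]; constructor <;> exact lie_smul _ _ _

end Prod

/-- The Lie subalgebra of strictly upper triangular matrices w.r.t. the order. -/
def triAlg (α : Type*) [Fintype α] [DecidableEq α] [PartialOrder α] :
    LieSubalgebra ℂ (Matrix α α ℂ) where
  carrier := {M | ∀ p q : α, ¬ p < q → M p q = 0}
  add_mem' := fun {a b} ha hb p q h => by
    simp only [Matrix.add_apply, ha p q h, hb p q h, add_zero]
  zero_mem' := fun p q _ => rfl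
  smul_mem' := fun c a ha p q h => by
    simp only [Matrix.smul_apply, ha p q h, smul_zero]
  lie_mem' := fun {a b} ha hb p q h => by
    have key : ∀ x y : Matrix α α ℂ, (∀ p q : α, ¬ p < q → x p q = 0) →
        (∀ p q : α, ¬ p < q → y p q = 0) → ∑ k, x p k * y k q = 0 := by
      intro x y hx hy
      apply Finset.sum_eq_zero
      intro k _
      by_cases h1 : p < k
      · by_cases h2 : k < q
        · exact absurd (h1.trans h2) h
        · rw [hy k q h2, mul_zero]
      · rw [hx p k h1, zero_mul]
    rw [Ring.lie_def]
    simp only [Matrix.sub_apply, Matrix.mul_apply]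
    rw [key a b ha hb, key b a hb ha, sub_zero]

lemma mem_triAlg {α : Type*} [Fintype α] [DecidableEq α] [PartialOrder α] {M : Matrix α α ℂ} :
    M ∈ triAlg α ↔ ∀ p q : α, ¬ p < q → M p q = 0 := Iff.rfl

lemma posetAlg_eq_triAlg (α : Type*) [Fintype α] [DecidableEq α] [PartialOrder α] :
    posetAlg α = triAlg α := by
  apply le_antisymm
  · rw [posetAlg, LieSubalgebra.lieSpan_le]
    rintro M ⟨p, q, hpq, rfl⟩
    intro a b hab
    have hne : ¬(p = a ∧ q = b) := fun ⟨hp, hq⟩ => hab (hp ▸ hq ▸ hpq)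
    by_cases hp : p = a
    · subst hp
      have : q ≠ b := fun hq => hne ⟨rfl, hq⟩
      exact Matrix.single_apply_of_ne _ _ _ _ _ (by tauto)
    · exact Matrix.single_apply_of_ne _ _ _ _ _ (by tauto)
  · intro M hM
    rw [mem_triAlg] at hM
    rw [posetAlg]
    have hrep := Matrix.matrix_eq_sum_single M
    rw [hrep]
    apply sum_mem
    intro p _
    apply sum_mem
    intro q _
    by_cases h : p < q
    · have : Matrix.single p q (M p q) = (M p q) • Matrix.single p q 1 := by
        rw [Matrix.smul_single, smul_eq_mul, mul_one]
      rw [this]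
      exact LieSubalgebra.smul_mem _ _ (LieSubalgebra.subset_lieSpan ⟨p, q, h, rfl⟩)
    · rw [hM p q h]
      simp only [Matrix.single_zero]
      exact zero_mem _

lemma submatrix_mem_triAlg {P : Type*} [Fintype P] [DecidableEq P] [PartialOrder P]
    {S : Set P} [Fintype ↥S] {M : Matrix P P ℂ} (hM : M ∈ triAlg P) :
    M.submatrix (Subtype.val : ↥S → P) (Subtype.val : ↥S → P) ∈ triAlg ↥S :=
  fun p q h => hM p q (fun hlt => h (Subtype.coe_lt_coe.mp hlt))

lemma submatrix_mul_triAlg {P : Type*} [Fintype P] [DecidableEq P] [PartialOrder P]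
    {S : Set P} [Fintype ↥S] {M N : Matrix P P ℂ} (hM : M ∈ triAlg P) (hN : N ∈ triAlg P)
    (hmid : ∀ p k q : P, p < k → k < q → p ∈ S → q ∈ S → k ∈ S) :
    (M * N).submatrix (Subtype.val : ↥S → P) (Subtype.val : ↥S → P) =
      M.submatrix (Subtype.val : ↥S → P) (Subtype.val : ↥S → P) *
        N.submatrix (Subtype.val : ↥S → P) (Subtype.val : ↥S → P) := by
  classical
  ext p q
  simp only [Matrix.submatrix_apply, Matrix.mul_apply]
  rw [← Finset.sum_subtype S.toFinset (fun x => Set.mem_toFinset)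
      (fun k => M ↑p k * N k ↑q)]
  apply (Finset.sum_subset (Finset.subset_univ _) _).symm
  intro k _ hk
  rw [Set.mem_toFinset] at hk
  by_cases h1 : (p : P) < k
  · by_cases h2 : k < (q : P)
    · exact absurd (hmid _ _ _ h1 h2 p.2 q.2) hk
    · rw [hN k q h2, mul_zero]
  · rw [hM p k h1, zero_mul]

open Classical in
/-- Glue two matrices indexed by subsets into a matrix on the whole set. -/
def glue {P : Type*} (P₁ P₂ : Set P)
    (A : Matrix ↥P₁ ↥P₁ ℂ) (B : Matrix ↥P₂ ↥P₂ ℂ) : Matrix P P ℂ :=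
  Matrix.of fun p q =>
    (if h : p ∈ P₁ ∧ q ∈ P₁ then A ⟨p, h.1⟩ ⟨q, h.2⟩ else 0) +
    (if h : p ∈ P₂ ∧ q ∈ P₂ then B ⟨p, h.1⟩ ⟨q, h.2⟩ else 0)

/-- If `P₁ ∪ P₂ = P`, `P₁ ∩ P₂` consists of minimal elements of `P` or consists of maximal
elements of `P`, and any strict relation between an element of `P₁` and an element of `P₂`
involves an element of `P₁ ∩ P₂`, then `g^≺(P) ≅ g^≺(P₁) ⊕ g^≺(P₂)` as Lie algebras. -/
theorem posetAlg_direct_sum (P : Type*) [Fintype P] [DecidableEq P] [PartialOrder P]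
    (P₁ P₂ : Set P) [Fintype ↥P₁] [Fintype ↥P₂]
    (h1 : P₁ ∪ P₂ = Set.univ)
    (h2 : (P₁ ∩ P₂ ⊆ {p | ∀ q, ¬ q < p}) ∨ (P₁ ∩ P₂ ⊆ {p | ∀ q, ¬ p < q}))
    (h3 : ∀ x ∈ P₁, ∀ y ∈ P₂, (x < y ∨ y < x) → x ∈ P₁ ∩ P₂ ∨ y ∈ P₁ ∩ P₂) :
    Nonempty (↥(posetAlg P) ≃ₗ⁅ℂ⁆ (↥(posetAlg ↥P₁) × ↥(posetAlg ↥P₂))) := by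
  classical
  rw [posetAlg_eq_triAlg P, posetAlg_eq_triAlg ↥P₁, posetAlg_eq_triAlg ↥P₂]
  -- combinatorial facts
  have hcov : ∀ p : P, p ∈ P₁ ∨ p ∈ P₂ := fun p => by
    have : p ∈ P₁ ∪ P₂ := h1 ▸ Set.mem_univ p
    exact this
  have hdisj : ∀ p q : P, p < q → ¬(p ∈ P₁ ∧ q ∈ P₁ ∧ p ∈ P₂ ∧ q ∈ P₂) := by
    rintro p q hpq ⟨hp1, hq1, hp2, hq2⟩
    rcases h2 with h | h
    · exact h ⟨hq1, hq2⟩ p hpq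
    · exact h ⟨hp1, hp2⟩ q hpq
  have hcov2 : ∀ p q : P, p < q → (p ∈ P₁ ∧ q ∈ P₁) ∨ (p ∈ P₂ ∧ q ∈ P₂) := by
    intro p q hpq
    rcases hcov p with hp | hp <;> rcases hcov q with hq | hq
    · exact Or.inl ⟨hp, hq⟩
    · rcases h3 p hp q hq (Or.inl hpq) with h | h
      · exact Or.inr ⟨h.2, hq⟩
      · exact Or.inl ⟨hp, h.1⟩
    · rcases h3 q hq p hp (Or.inr hpq) with h | h
      · exact Or.inr ⟨hp, h.2⟩
      · exact Or.inl ⟨h.1, hq⟩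
    · exact Or.inr ⟨hp, hq⟩
  have hmid1 : ∀ p k q : P, p < k → k < q → p ∈ P₁ → q ∈ P₁ → k ∈ P₁ := by
    intro p k q hpk hkq hp hq
    by_contra hk
    have hk2 : k ∈ P₂ := (hcov k).resolve_left hk
    have hpI : p ∈ P₁ ∩ P₂ := by
      rcases h3 p hp k hk2 (Or.inl hpk) with h | h
      · exact h
      · exact absurd h.1 hk
    have hqI : q ∈ P₁ ∩ P₂ := by
      rcases h3 q hq k hk2 (Or.inr hkq) with h | h
      · exact h
      · exact absurd h.1 hk
    rcases h2 with h | h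
    · exact h hqI k hkq
    · exact h hpI k hpk
  have hmid2 : ∀ p k q : P, p < k → k < q → p ∈ P₂ → q ∈ P₂ → k ∈ P₂ := by
    intro p k q hpk hkq hp hq
    by_contra hk
    have hk1 : k ∈ P₁ := (hcov k).resolve_right hk
    have hpI : p ∈ P₁ ∩ P₂ := by
      rcases h3 k hk1 p hp (Or.inr hpk) with h | h
      · exact absurd h.2 hk
      · exact h
    have hqI : q ∈ P₁ ∩ P₂ := by
      rcases h3 k hk1 q hq (Or.inl hkq) with h | h
      · exact absurd h.2 hk
      · exact h
    rcases h2 with h | h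
    · exact h hqI k hkq
    · exact h hpI k hpk
  have hglue_mem : ∀ (A : Matrix ↥P₁ ↥P₁ ℂ) (B : Matrix ↥P₂ ↥P₂ ℂ),
      A ∈ triAlg ↥P₁ → B ∈ triAlg ↥P₂ → glue P₁ P₂ A B ∈ triAlg P := by
    intro A B hA hB p q h
    show (if h' : p ∈ P₁ ∧ q ∈ P₁ then A ⟨p, h'.1⟩ ⟨q, h'.2⟩ else 0) +
      (if h' : p ∈ P₂ ∧ q ∈ P₂ then B ⟨p, h'.1⟩ ⟨q, h'.2⟩ else 0) = 0
    have e1 : ∀ h' : p ∈ P₁ ∧ q ∈ P₁, A ⟨p, h'.1⟩ ⟨q, h'.2⟩ = 0 :=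
      fun h' => hA _ _ (fun hlt => h (Subtype.coe_lt_coe.mpr hlt))
    have e2 : ∀ h' : p ∈ P₂ ∧ q ∈ P₂, B ⟨p, h'.1⟩ ⟨q, h'.2⟩ = 0 :=
      fun h' => hB _ _ (fun hlt => h (Subtype.coe_lt_coe.mpr hlt))
    split_ifs with hx hy hy <;> simp [e1, e2, hx, hy]
  refine ⟨{
    toFun := fun x =>
      (⟨(x : Matrix P P ℂ).submatrix Subtype.val Subtype.val, submatrix_mem_triAlg x.2⟩,
       ⟨(x : Matrix P P ℂ).submatrix Subtype.val Subtype.val, submatrix_mem_triAlg x.2⟩)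
    map_add' := ?_
    map_smul' := ?_
    map_lie' := ?_
    invFun := fun y => ⟨glue P₁ P₂ y.1 y.2, hglue_mem _ _ y.1.2 y.2.2⟩
    left_inv := ?_
    right_inv := ?_ }⟩
  · intro x y
    refine Prod.ext ?_ ?_ <;>
      exact Subtype.ext (by ext p q; simp [Matrix.add_apply])
  · intro c x
    refine Prod.ext ?_ ?_ <;>
      exact Subtype.ext (by ext p q; rfl)
  · intro x y
    refine Prod.ext (Subtype.ext ?_) (Subtype.ext ?_)
    · show (⁅(x : Matrix P P ℂ), (y : Matrix P P ℂ)⁆).submatrix (Subtype.val : ↥P₁ → P)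
          (Subtype.val : ↥P₁ → P) =
        ⁅(x : Matrix P P ℂ).submatrix (Subtype.val : ↥P₁ → P) (Subtype.val : ↥P₁ → P),
          (y : Matrix P P ℂ).submatrix (Subtype.val : ↥P₁ → P) (Subtype.val : ↥P₁ → P)⁆
      simp only [Ring.lie_def, Matrix.submatrix_sub, Pi.sub_apply,
        submatrix_mul_triAlg x.2 y.2 hmid1, submatrix_mul_triAlg y.2 x.2 hmid1]
    · show (⁅(x : Matrix P P ℂ), (y : Matrix P P ℂ)⁆).submatrix (Subtype.val : ↥P₂ → P)
          (Subtype.val : ↥P₂ → P) =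
        ⁅(x : Matrix P P ℂ).submatrix (Subtype.val : ↥P₂ → P) (Subtype.val : ↥P₂ → P),
          (y : Matrix P P ℂ).submatrix (Subtype.val : ↥P₂ → P) (Subtype.val : ↥P₂ → P)⁆
      simp only [Ring.lie_def, Matrix.submatrix_sub, Pi.sub_apply,
        submatrix_mul_triAlg x.2 y.2 hmid2, submatrix_mul_triAlg y.2 x.2 hmid2]
  · intro x
    apply Subtype.ext
    ext p q
    show (if h' : p ∈ P₁ ∧ q ∈ P₁ then (x : Matrix P P ℂ) p q else 0) +
      (if h' : p ∈ P₂ ∧ q ∈ P₂ then (x : Matrix P P ℂ) p q else 0) = (x : Matrix P P ℂ) p q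
    by_cases h : p < q
    · rcases hcov2 p q h with ⟨hp, hq⟩ | ⟨hp, hq⟩
      · rw [dif_pos ⟨hp, hq⟩, dif_neg (fun hc => hdisj p q h ⟨hp, hq, hc.1, hc.2⟩), add_zero]
      · rw [dif_neg (fun hc => hdisj p q h ⟨hc.1, hc.2, hp, hq⟩), dif_pos ⟨hp, hq⟩, zero_add]
    · have h0 : (x : Matrix P P ℂ) p q = 0 := x.2 p q h
      split_ifs <;> simp [h0]
  · intro y
    refine Prod.ext ?_ ?_ <;> apply Subtype.ext <;> ext p q
    · show (if h' : (p : P) ∈ P₁ ∧ (q : P) ∈ P₁ then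
          (y.1 : Matrix ↥P₁ ↥P₁ ℂ) ⟨↑p, h'.1⟩ ⟨↑q, h'.2⟩ else 0) +
        (if h' : (p : P) ∈ P₂ ∧ (q : P) ∈ P₂ then
          (y.2 : Matrix ↥P₂ ↥P₂ ℂ) ⟨↑p, h'.1⟩ ⟨↑q, h'.2⟩ else 0)
        = (y.1 : Matrix ↥P₁ ↥P₁ ℂ) p q
      rw [dif_pos ⟨p.2, q.2⟩]
      show (y.1 : Matrix ↥P₁ ↥P₁ ℂ) p q + _ = _
      by_cases hc : (p : P) ∈ P₂ ∧ (q : P) ∈ P₂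
      · rw [dif_pos hc]
        show _ + (y.2 : Matrix ↥P₂ ↥P₂ ℂ) ⟨↑p, hc.1⟩ ⟨↑q, hc.2⟩ = _
        have hlt : ¬ (p : P) < (q : P) := fun hlt => hdisj ↑p ↑q hlt ⟨p.2, q.2, hc.1, hc.2⟩
        rw [y.2.2 _ _ (fun hx => hlt (Subtype.coe_lt_coe.mpr hx)), add_zero]
      · rw [dif_neg hc, add_zero]
    · show (if h' : (p : P) ∈ P₁ ∧ (q : P) ∈ P₁ then
          (y.1 : Matrix ↥P₁ ↥P₁ ℂ) ⟨↑p, h'.1⟩ ⟨↑q, h'.2⟩ else 0) +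
        (if h' : (p : P) ∈ P₂ ∧ (q : P) ∈ P₂ then
          (y.2 : Matrix ↥P₂ ↥P₂ ℂ) ⟨↑p, h'.1⟩ ⟨↑q, h'.2⟩ else 0)
        = (y.2 : Matrix ↥P₂ ↥P₂ ℂ) p q
      by_cases hc : (p : P) ∈ P₁ ∧ (q : P) ∈ P₁
      · rw [dif_pos hc, dif_pos ⟨p.2, q.2⟩]
        show (y.1 : Matrix ↥P₁ ↥P₁ ℂ) ⟨↑p, hc.1⟩ ⟨↑q, hc.2⟩ + (y.2 : Matrix ↥P₂ ↥P₂ ℂ) p q = _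
        have hlt : ¬ (p : P) < (q : P) := fun hlt => hdisj ↑p ↑q hlt ⟨hc.1, hc.2, p.2, q.2⟩
        rw [y.1.2 _ _ (fun hx => hlt (Subtype.coe_lt_coe.mpr hx)), zero_add]
      · rw [dif_neg hc, dif_pos ⟨p.2, q.2⟩]
        show (0 : ℂ) + (y.2 : Matrix ↥P₂ ↥P₂ ℂ) p q = _
        rw [zero_add]
end
end

section
/- Let P be a finite poset and define, for p ∈ P, D(P,p) = #{q : q ≺ p} and U(P,p) = #{q : p ≺ q}, and let Ext(P) be the union of minimal and maximal elements of P. For the chained poset P(a₁,...,a_m) on [N] (N = a₁+⋯+a_m) whose blocks A₁,...,A_m of sizes a₁,...,a_m satisfy p ≺ q exactly when p ∈ A_i, q ∈ A_j with i < j, the quantity I(a₁,...,a_m) := |Rel| − 2 Σ_{p ∉ Ext} min(D(P,p), U(P,p)) (where Rel is the set of strict relations) satisfies the recursion: I(a₁,a₂) = a₁a₂; and for m ≥ 3, I(a₁,...,a_m) = I(a₂,...,a_{m−1}) + a₁a_m if a₁ = a_m, I(a₁,...,a_m) = I(a₁−a_m, a₂,...,a_{m−1}) + a₁a_m if a₁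 > a_m, and I(a₁,...,a_m) = I(a₂,...,a_m−a₁) + a₁a_m if a₁ < a_m. -/
noncomputable section

/-- The chained poset `P(a₁,…,a_m)` given by the list `c = [a₁,…,a_m]`: the underlying set is the
disjoint union of consecutive blocks of sizes `a₁,…,a_m`. -/
abbrev ChainPoset (c : List ℕ) : Type := Σ i : Fin c.length, Fin (c.get i)

/-- The strict order relation on the chained poset: `p ≺ q` iff the block index of `p` is
strictly smaller than that of `q`. -/
def cplt {c : List ℕ} (p q : ChainPoset c) : Prop := p.1 < q.1

/-- `D(P,p) = #{q : q ≺ p}`. -/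
def Dn (c : List ℕ) (p : ChainPoset c) : ℕ := Nat.card {q : ChainPoset c // cplt q p}

/-- `U(P,p) = #{q : p ≺ q}`. -/
def Un (c : List ℕ) (p : ChainPoset c) : ℕ := Nat.card {q : ChainPoset c // cplt p q}

/-- The number of strict relations of the chained poset. -/
def RelN (c : List ℕ) : ℕ := Nat.card {x : ChainPoset c × ChainPoset c // cplt x.1 x.2}

/-- `p` is extremal (minimal or maximal). -/
def isExt (c : List ℕ) (p : ChainPoset c) : Prop :=
  (∀ q : ChainPoset c, ¬ cplt q p) ∨ (∀ q : ChainPoset c, ¬ cplt p q)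

/-- The quantity `I(a₁,…,a_m) = |Rel| − 2 Σ_{p ∉ Ext} min(D(P,p), U(P,p))`. -/
def Iq (c : List ℕ) : ℤ :=
  letI : ∀ p : ChainPoset c, Decidable (isExt c p) := fun _ => Classical.propDecidable _
  (RelN c : ℤ) - 2 * ∑ p : ChainPoset c, if isExt c p then 0 else (min (Dn c p) (Un c p) : ℤ)

-- auxiliary defs
def pre (c : List ℕ) (k : ℕ) : ℕ := (c.take k).sum
def suf (c : List ℕ) (k : ℕ) : ℕ := (c.drop (k+1)).sum

lemma sum_ite_lt (c : List ℕ) (k : ℕ) :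
    ∑ i : Fin c.length, (if i.val < k then c.get i else 0) = pre c k := by
  induction c generalizing k with
  | nil => simp [pre]
  | cons a t ih =>
    erw [Fin.sum_univ_succ]
    cases k with
    | zero => simp [pre]
    | succ k => simpa [pre, List.take_succ_cons, Nat.succ_lt_succ_iff, List.get_eq_getElem] using ih k

lemma sum_ite_gt (c : List ℕ) (k : ℕ) :
    ∑ i : Fin c.length, (if k < i.val then c.get i else 0) = suf c k := by
  induction c generalizing k with
  | nil => simp [suf]
  | cons a t ih =>
    erw [Fin.sum_univ_succ]
    cases k with
    | zero => simp [suf]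
    | succ k => simpa [suf, Nat.succ_lt_succ_iff, List.get_eq_getElem] using ih k

lemma sum_sigma_ite (c : List ℕ) (P : ℕ → Prop) [DecidablePred P] :
    (∑ q : ChainPoset c, if P q.1.val then (1:ℕ) else 0)
      = ∑ i : Fin c.length, if P i.val then c.get i else 0 := by
  rw [← Finset.univ_sigma_univ, Finset.sum_sigma]
  refine Finset.sum_congr rfl fun i _ => ?_
  by_cases h : P i.val <;> simp [h]

lemma Dn_eq (c : List ℕ) (p : ChainPoset c) : Dn c p = pre c p.1.val := by
  classical
  rw [Dn, Nat.card_eq_fintype_card, Fintype.card_subtype, Finset.card_filter]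
  rw [← sum_ite_lt c p.1.val, ← sum_sigma_ite c (fun k => k < p.1.val)]
  exact Finset.sum_congr rfl fun q _ => if_congr Iff.rfl rfl rfl

lemma Un_eq (c : List ℕ) (p : ChainPoset c) : Un c p = suf c p.1.val := by
  classical
  rw [Un, Nat.card_eq_fintype_card, Fintype.card_subtype, Finset.card_filter]
  rw [← sum_ite_gt c p.1.val, ← sum_sigma_ite c (fun k => p.1.val < k)]
  exact Finset.sum_congr rfl fun q _ => if_congr Iff.rfl rfl rfl

def e2 (c : List ℕ) : ℕ := ∑ i : Fin c.length, c.get i * suf c i.val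
def G (c : List ℕ) : ℕ := ∑ i : Fin c.length, c.get i * min (pre c i.val) (suf c i.val)

lemma RelN_eq (c : List ℕ) : RelN c = e2 c := by
  classical
  rw [RelN, Nat.card_eq_fintype_card, Fintype.card_subtype, Finset.card_filter]
  rw [Fintype.sum_prod_type]
  have h1 : ∀ p : ChainPoset c,
      (∑ q : ChainPoset c, if cplt p q then (1:ℕ) else 0) = suf c p.1.val := by
    intro p
    rw [← sum_ite_gt c p.1.val, ← sum_sigma_ite c (fun k => p.1.val < k)]
    exact Finset.sum_congr rfl fun q _ => if_congr Iff.rfl rfl rfl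
  rw [Finset.sum_congr rfl fun p _ => h1 p]
  rw [← Finset.univ_sigma_univ, Finset.sum_sigma]
  refine Finset.sum_congr rfl fun i _ => ?_
  simp [mul_comm]

lemma Iq_eq (c : List ℕ) (hlen : 0 < c.length)
    (h0 : 0 < c.get ⟨0, hlen⟩)
    (h1 : 0 < c.get ⟨c.length - 1, by omega⟩) :
    Iq c = (e2 c : ℤ) - 2 * (G c : ℤ) := by
  classical
  have hext : ∀ p : ChainPoset c, isExt c p ↔ (p.1.val = 0 ∨ p.1.val = c.length - 1) := by
    intro p
    constructor
    · rintro (h | h)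
      · left
        by_contra hp
        exact h ⟨⟨0, hlen⟩, ⟨0, h0⟩⟩ (by simpa [cplt, Fin.lt_def] using Nat.pos_of_ne_zero hp)
      · right
        by_contra hp
        refine h ⟨⟨c.length - 1, by omega⟩, ⟨0, h1⟩⟩ ?_
        have := p.1.isLt
        simp only [cplt, Fin.lt_def]
        omega
    · rintro (h | h)
      · exact Or.inl fun q hq => by simp [cplt, Fin.lt_def, h] at hq
      · refine Or.inr fun q hq => ?_
        have := q.1.isLt
        simp only [cplt, Fin.lt_def, h] at hq
        omega
  rw [Iq, RelN_eq]
  congr 1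
  congr 1
  rw [← Finset.univ_sigma_univ, Finset.sum_sigma, G, Nat.cast_sum]
  refine Finset.sum_congr rfl fun i _ => ?_
  have hsum : ∀ j : Fin (c.get i),
      (if isExt c ⟨i,j⟩ then (0:ℤ) else (min (Dn c ⟨i,j⟩) (Un c ⟨i,j⟩) : ℤ))
        = if (i.val = 0 ∨ i.val = c.length - 1) then 0
          else ((min (pre c i.val) (suf c i.val) : ℕ) : ℤ) := fun j => by
    rw [if_congr (hext ⟨i,j⟩) rfl rfl]
    congr 1
    rw [Dn_eq, Un_eq]
    exact (Nat.cast_min ..).symm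
  rw [Finset.sum_congr rfl fun j _ => hsum j, Finset.sum_const, Finset.card_univ,
    Fintype.card_fin, nsmul_eq_mul]
  by_cases hi : i.val = 0 ∨ i.val = c.length - 1
  · rcases hi with h | h
    · simp [h, pre]
    · have hz : suf c i.val = 0 := by
        have : c.length - 1 + 1 = c.length := by omega
        simp [suf, h, this]
      rw [h] at hz
      simp [h, hz]
  · push_neg at hi
    simp [hi]

lemma pre_cons_succ (u : ℕ) (t : List ℕ) (k : ℕ) : pre (u::t) (k+1) = u + pre t k := by
  simp [pre]
lemma suf_cons_succ (u : ℕ) (t : List ℕ) (k : ℕ) : suf (u::t) (k+1) = suf t k := by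
  simp [suf]
lemma suf_cons_zero (u : ℕ) (t : List ℕ) : suf (u::t) 0 = t.sum := by
  simp [suf]

lemma e2_nil : e2 [] = 0 := by simp [e2]

lemma e2_cons (u : ℕ) (t : List ℕ) : e2 (u::t) = u * t.sum + e2 t := by
  rw [e2]
  erw [Fin.sum_univ_succ]
  simp only [Fin.val_succ, suf_cons_succ, suf_cons_zero, List.get_eq_getElem,
    List.getElem_cons_succ, List.getElem_cons_zero, Fin.val_zero]
  rw [e2]
  simp [List.get_eq_getElem]

lemma e2_append (L : List ℕ) (b : ℕ) : e2 (L ++ [b]) = e2 L + L.sum * b := by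
  induction L with
  | nil => simp [e2_cons, e2_nil]
  | cons u t ih =>
    rw [List.cons_append, e2_cons, ih, e2_cons, List.sum_append]
    simp [List.sum_cons, Nat.mul_add, Nat.add_mul]
    ring

def H (a b : ℕ) (t : List ℕ) : ℕ :=
  ∑ i : Fin t.length, t.get i * min (a + pre t i.val) (suf t i.val + b)

lemma H_nil (a b : ℕ) : H a b [] = 0 := by simp [H]

lemma H_cons (a b u : ℕ) (t : List ℕ) :
    H a b (u::t) = u * min a (t.sum + b) + H (a+u) b t := by
  rw [H]
  erw [Fin.sum_univ_succ]
  simp only [Fin.val_succ, suf_cons_succ, suf_cons_zero, pre_cons_succ, List.get_eq_getElem,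
    List.getElem_cons_succ, List.getElem_cons_zero, Fin.val_zero, ← Nat.add_assoc]
  rw [H]
  simp [List.get_eq_getElem, pre]

lemma G_eq_H (t : List ℕ) : G t = H 0 0 t := by
  rw [G, H]
  exact Finset.sum_congr rfl fun i _ => by rw [Nat.zero_add, Nat.add_zero]

lemma H_append (b : ℕ) (L : List ℕ) : ∀ a, H a 0 (L ++ [b]) = H a b L := by
  induction L with
  | nil => intro a; simp [H_cons, H_nil]
  | cons u t ih =>
    intro a
    rw [List.cons_append, H_cons, ih, H_cons, List.sum_append]
    simp [List.sum_cons]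

lemma H_shift (a b s : ℕ) (L : List ℕ) : H (a+s) (b+s) L = H a b L + s * L.sum := by
  rw [H, H]
  have : L.sum = ∑ i : Fin L.length, L.get i := by
    conv_lhs => rw [← List.ofFn_get L]
    rw [List.sum_ofFn]
  rw [this, Finset.mul_sum, ← Finset.sum_add_distrib]
  refine Finset.sum_congr rfl fun i _ => ?_
  have : min (a + s + pre L i.val) (suf L i.val + (b + s))
      = min (a + pre L i.val) (suf L i.val + b) + s := by omega
  rw [this]
  ring

lemma hpos_get (c : List ℕ) (h : ∀ n ∈ c, 0 < n) (i : Fin c.length) : 0 < c.get i :=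
  h _ (List.get_mem c i)

/-- The recursion for `I(a₁,…,a_m)` (Lemma on the index of `g^≺(a₁,…,a_m)`):
`I(a₁,a₂) = a₁a₂`, and for `m ≥ 3` (i.e. nonempty middle list `L`),
`I(a₁,…,a_m)` equals `I` of the reduced composition plus `a₁a_m`, according to whether
`a₁ = a_m`, `a₁ > a_m` or `a₁ < a_m`. -/
theorem chain_index_recursion (x y : ℕ) (L : List ℕ) (hx : 0 < x) (hy : 0 < y)
    (hL : ∀ n ∈ L, 0 < n) :
    Iq [x, y] = x * y ∧
    (L ≠ [] →
      (x = y → Iq (x :: L ++ [y]) = Iq L + x * y) ∧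
      (y < x → Iq (x :: L ++ [y]) = Iq ((x - y) :: L) + x * y) ∧
      (x < y → Iq (x :: L ++ [y]) = Iq (L ++ [y - x]) + x * y)) := by
  have hxy2 : ∀ n ∈ [x, y], 0 < n := by
    intro n hn; simp at hn; rcases hn with h | h <;> omega
  constructor
  · rw [Iq_eq [x,y] (by simp) (hpos_get _ hxy2 _) (hpos_get _ hxy2 _)]
    have he : e2 [x,y] = x * y := by
      rw [e2_cons, e2_cons, e2_nil]; simp
    have hg : G [x,y] = 0 := by
      rw [G_eq_H, H_cons, H_cons, H_nil]; simp
    rw [he, hg]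
    push_cast
    ring
  · intro hLne
    have hk : 0 < L.length := List.length_pos_iff.mpr hLne
    have hcpos : ∀ n ∈ x :: L ++ [y], 0 < n := by
      intro n hn
      rcases List.mem_append.mp hn with h | h
      · rcases List.mem_cons.mp h with h | h
        · omega
        · exact hL n h
      · rw [List.mem_singleton] at h; omega
    have hlenc : 0 < (x :: L ++ [y]).length := by simp
    have hIqc : Iq (x :: L ++ [y])
        = ((x * (L.sum + y) + (e2 L + L.sum * y) : ℕ) : ℤ) - 2 * ((H x y L : ℕ) : ℤ) := by
      have he : e2 ((x :: L) ++ [y]) = x * (L.sum + y) + (e2 L + L.sum * y) := by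
        rw [List.cons_append, e2_cons, e2_append, List.sum_append]; simp
      have hg : G ((x :: L) ++ [y]) = H x y L := by
        rw [List.cons_append, G_eq_H, H_cons, H_append]
        simp
      rw [Iq_eq _ (by simp) (hpos_get _ hcpos _) (hpos_get _ hcpos _), he, hg]
    refine ⟨?_, ?_, ?_⟩
    · intro hxy
      subst hxy
      have hIqL : Iq L = (e2 L : ℤ) - 2 * (G L : ℤ) :=
        Iq_eq L hk (hpos_get _ hL _) (hpos_get _ hL _)
      have hH : H x x L = G L + x * L.sum := by
        have := H_shift 0 0 x L
        simpa [G_eq_H] using this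
      rw [hIqc, hIqL, hH]
      push_cast
      ring
    · intro hyx
      have hIq' : Iq ((x - y) :: L) = (e2 ((x - y) :: L) : ℤ) - 2 * (G ((x - y) :: L) : ℤ) := by
        refine Iq_eq _ (by simp) (hpos_get _ ?_ _) (hpos_get _ ?_ _) <;>
        · intro n hn
          simp only [List.mem_cons] at hn
          rcases hn with h | h
          · omega
          · exact hL n h
      have he : e2 ((x - y) :: L) = (x - y) * L.sum + e2 L := by
        rw [e2_cons]
      have hg : G ((x - y) :: L) = H (x - y) 0 L := by
        rw [G_eq_H, H_cons]; simp
      have hH : H x y L = H (x - y) 0 L + y * L.sum := by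
        have := H_shift (x - y) 0 y L
        rw [show x - y + y = x from by omega, Nat.zero_add] at this
        exact this
      rw [hIqc, hIq', he, hg, hH]
      push_cast [Nat.cast_sub hyx.le]
      ring
    · intro hxy
      have hIq' : Iq (L ++ [y - x]) = (e2 (L ++ [y - x]) : ℤ) - 2 * (G (L ++ [y - x]) : ℤ) := by
        refine Iq_eq _ (by simp) (hpos_get _ ?_ _) (hpos_get _ ?_ _) <;>
        · intro n hn
          simp only [List.mem_append, List.mem_singleton] at hn
          rcases hn with h | h
          · exact hL n h
          · omega
      have he : e2 (L ++ [y - x]) = e2 L + L.sum * (y - x) := e2_append L (y - x)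
      have hg : G (L ++ [y - x]) = H 0 (y - x) L := by
        rw [G_eq_H, H_append]
      have hH : H x y L = H 0 (y - x) L + x * L.sum := by
        have := H_shift 0 (y - x) x L
        rw [show y - x + x = y from by omega, Nat.zero_add] at this
        exact this
      rw [hIqc, hIq', he, hg, hH]
      push_cast [Nat.cast_sub hxy.le]
      ring
end
end

section
/- Let s be a seaweed subalgebra of gl(N,ℂ) determined by compositions a and b of N, and let λ₁ < ⋯ < λ_ℓ be the elements of PS(a) ∩ PS(b). Define an equivalence relation on [N] where i ∼ j iff i and j lie in the same interval among {1,...,λ₁}, {λ₁+1,...,λ₂}, ..., {λ_{ℓ−1}+1,...,λ_ℓ}. Then the center Z(s) of s equals the set of diagonal matrices Σᵢ cᵢ E_{i,i} in s such that cᵢ = cⱼ whenever i ∼ j. In particular, dim Z(s) = ℓ = |PS(a) ∩ PS(b)|. -/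
noncomputable section

attribute [local instance 100] LieRing.ofAssociativeRing

/-- The elementary matrix `E_{p,q}` in `gl(N,ℂ)`. -/
def Emat (N : ℕ) (p q : Fin N) : Matrix (Fin N) (Fin N) ℂ := Matrix.single p q 1

/-- The set of partial sums `PS(c) = {c₁+⋯+c_j : 1 ≤ j ≤ r}` of a composition `c`. -/
def PS (c : List ℕ) : Set ℕ := {k | ∃ j, 1 ≤ j ∧ j ≤ c.length ∧ k = (c.take j).sum}

/-- Positions `i` and `j` (0-indexed members of `[N]`) lie in a common consecutive block of the
composition `c`: no partial sum of `c` separates them. -/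
def sameBlock (c : List ℕ) (i j : ℕ) : Prop :=
  ∀ k ∈ PS c, ¬ (min i j < k ∧ k ≤ max i j)

/-- The spanning set of the seaweed algebra `p(a₁|⋯|a_n / b₁|⋯|b_m)`: all diagonal `E_{j,j}`,
all `E_{p,q}` with `p > q` in a common block of `a`, and all `E_{p,q}` with `p < q` in a common
block of `b`. -/
def seaweedSet (a b : List ℕ) (N : ℕ) : Set (Matrix (Fin N) (Fin N) ℂ) :=
  {M | ∃ j, M = Emat N j j} ∪
  {M | ∃ p q : Fin N, (q : ℕ) < p ∧ sameBlock a (p : ℕ) (q : ℕ) ∧ M = Emat N p q} ∪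
  {M | ∃ p q : Fin N, (p : ℕ) < q ∧ sameBlock b (p : ℕ) (q : ℕ) ∧ M = Emat N p q}

/-- The seaweed subalgebra `p(a / b)` of `gl(N,ℂ)`, spanned by `seaweedSet a b N`
(this set is closed under brackets, so the Lie span coincides with the linear span). -/
def seaweed (a b : List ℕ) (N : ℕ) : LieSubalgebra ℂ (Matrix (Fin N) (Fin N) ℂ) :=
  LieSubalgebra.lieSpan ℂ _ (seaweedSet a b N)

/-- The center `Z(s) = {x ∈ s : ⁅x,y⁆ = 0 for all y ∈ s}` of a Lie subalgebra, as a subspace of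
the ambient Lie algebra. -/
def centerSub {L : Type*} [LieRing L] [LieAlgebra ℂ L] (s : LieSubalgebra ℂ L) :
    Submodule ℂ L where
  carrier := {x | x ∈ s ∧ ∀ y ∈ s, ⁅x, y⁆ = 0}
  add_mem' := by
    rintro a b ⟨ha, ha2⟩ ⟨hb, hb2⟩
    exact ⟨add_mem ha hb, fun y hy => by rw [add_lie, ha2 y hy, hb2 y hy, add_zero]⟩
  zero_mem' := ⟨zero_mem _, fun y _ => by rw [zero_lie]⟩
  smul_mem' := by
    rintro c x ⟨hx, hx2⟩
    exact ⟨s.smul_mem c hx, fun y hy => by rw [smul_lie, hx2 y hy, smul_zero]⟩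

/-- Positions `i` and `j` (0-indexed) lie in the same central interval determined by the common
partial sums of `a` and `b`: no common partial sum separates them. -/
def central (a b : List ℕ) (i j : ℕ) : Prop :=
  ∀ t, t ∈ PS a → t ∈ PS b → ¬ (min i j < t ∧ t ≤ max i j)

-- auxiliary lemmas


def ok (a b : List ℕ) {N : ℕ} (p q : Fin N) : Prop :=
  p = q ∨ ((q : ℕ) < p ∧ sameBlock a p q) ∨ ((p : ℕ) < q ∧ sameBlock b p q)

lemma sameBlock_of {c : List ℕ} {i j i' j' : ℕ} (h : sameBlock c i j)
    (h1 : min i j ≤ min i' j') (h2 : max i' j' ≤ max i j) : sameBlock c i' j' :=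
  fun k hk hc => h k hk ⟨lt_of_le_of_lt h1 hc.1, hc.2.trans h2⟩

lemma sameBlock_union {c : List ℕ} {i j k : ℕ} (h1 : sameBlock c i j) (h2 : sameBlock c j k) :
    sameBlock c i k := fun t ht hc => by
  have A := h1 t ht; have B := h2 t ht; omega

lemma ok_trans {a b : List ℕ} {N : ℕ} {p r q : Fin N}
    (h1 : ok a b p r) (h2 : ok a b r q) : ok a b p q := by
  rcases h1 with rfl | ⟨l1, s1⟩ | ⟨l1, s1⟩
  · exact h2
  · rcases h2 with rfl | ⟨l2, s2⟩ | ⟨l2, s2⟩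
    · exact Or.inr (Or.inl ⟨l1, s1⟩)
    · exact Or.inr (Or.inl ⟨l2.trans l1, sameBlock_union s1 s2⟩)
    · rcases Nat.lt_trichotomy (p : ℕ) (q : ℕ) with hpq | hpq | hpq
      · exact Or.inr (Or.inr ⟨hpq, sameBlock_of s2 (by omega) (by omega)⟩)
      · exact Or.inl (Fin.ext hpq)
      · exact Or.inr (Or.inl ⟨hpq, sameBlock_of s1 (by omega) (by omega)⟩)
  · rcases h2 with rfl | ⟨l2, s2⟩ | ⟨l2, s2⟩
    · exact Or.inr (Or.inr ⟨l1, s1⟩)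
    · rcases Nat.lt_trichotomy (p : ℕ) (q : ℕ) with hpq | hpq | hpq
      · exact Or.inr (Or.inr ⟨hpq, sameBlock_of s1 (by omega) (by omega)⟩)
      · exact Or.inl (Fin.ext hpq)
      · exact Or.inr (Or.inl ⟨hpq, sameBlock_of s2 (by omega) (by omega)⟩)
    · exact Or.inr (Or.inr ⟨l1.trans l2, sameBlock_union s1 s2⟩)

lemma mul_mem_aux {a b : List ℕ} {N : ℕ} {x y : Matrix (Fin N) (Fin N) ℂ}
    (hx : ∀ p q, ¬ ok a b p q → x p q = 0) (hy : ∀ p q, ¬ ok a b p q → y p q = 0)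
    {p q : Fin N} (h : ¬ ok a b p q) : (x * y) p q = 0 := by
  rw [Matrix.mul_apply]
  apply Finset.sum_eq_zero
  intro r _
  by_cases h1 : ok a b p r
  · rw [hy r q fun h2 => h (ok_trans h1 h2), mul_zero]
  · rw [hx p r h1, zero_mul]

def SW (a b : List ℕ) (N : ℕ) : LieSubalgebra ℂ (Matrix (Fin N) (Fin N) ℂ) where
  carrier := {M | ∀ p q : Fin N, ¬ ok a b p q → M p q = 0}
  add_mem' := by
    intro x y hx hy p q h
    rw [Matrix.add_apply, hx p q h, hy p q h, add_zero]
  zero_mem' := by intro p q h; rfl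
  smul_mem' := by
    intro c M hM p q h
    rw [Matrix.smul_apply, hM p q h, smul_zero]
  lie_mem' := by
    intro x y hx hy p q h
    rw [Ring.lie_def, Matrix.sub_apply, mul_mem_aux hx hy h, mul_mem_aux hy hx h, sub_zero]

lemma mem_SW {a b : List ℕ} {N : ℕ} {M : Matrix (Fin N) (Fin N) ℂ} :
    M ∈ SW a b N ↔ ∀ p q : Fin N, ¬ ok a b p q → M p q = 0 := Iff.rfl

lemma Emat_mem_SW {a b : List ℕ} {N : ℕ} {i j : Fin N} (hij : ok a b i j) :
    Emat N i j ∈ SW a b N := by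
  intro p q h
  show (if i = p ∧ j = q then (1:ℂ) else 0) = 0
  exact if_neg (by rintro ⟨rfl, rfl⟩; exact h hij)

lemma seaweed_eq_SW (a b : List ℕ) (N : ℕ) : seaweed a b N = SW a b N := by
  apply le_antisymm
  · rw [seaweed, LieSubalgebra.lieSpan_le]
    rintro M ((⟨j, rfl⟩ | ⟨p, q, h1, h2, rfl⟩) | ⟨p, q, h1, h2, rfl⟩)
    · exact Emat_mem_SW (Or.inl rfl)
    · exact Emat_mem_SW (Or.inr (Or.inl ⟨h1, h2⟩))
    · exact Emat_mem_SW (Or.inr (Or.inr ⟨h1, h2⟩))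
  · intro M hM
    have hrep : M = ∑ p : Fin N, ∑ q : Fin N, M p q • Emat N p q := by
      ext i j
      simp [Emat, Matrix.single, Matrix.sum_apply, ite_and]
    have hspan : M ∈ Submodule.span ℂ (seaweedSet a b N) := by
      rw [hrep]
      refine Submodule.sum_mem _ fun p _ => Submodule.sum_mem _ fun q _ => ?_
      by_cases h0 : M p q = 0
      · simp [h0]
      · refine Submodule.smul_mem _ _ (Submodule.subset_span ?_)
        have hok : ok a b p q := not_not.mp fun h => h0 (hM p q h)
        rcases hok with rfl | ⟨h1, h2⟩ | ⟨h1, h2⟩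
        · exact Or.inl (Or.inl ⟨p, rfl⟩)
        · exact Or.inl (Or.inr ⟨p, q, h1, h2, rfl⟩)
        · exact Or.inr ⟨p, q, h1, h2, rfl⟩
    exact Submodule.span_le.mpr (LieSubalgebra.subset_lieSpan) hspan

lemma lie_Emat_apply {N : ℕ} (x : Matrix (Fin N) (Fin N) ℂ) (i j p q : Fin N) :
    ⁅x, Emat N i j⁆ p q = (if j = q then x p i else 0) - (if i = p then x j q else 0) := by
  rw [Ring.lie_def, Matrix.sub_apply, Matrix.mul_apply, Matrix.mul_apply]
  congr 1
  · simp [Emat, Matrix.single, mul_ite, ite_and, Finset.sum_ite_eq]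
  · simp [Emat, Matrix.single, ite_and]

lemma central_symm {a b : List ℕ} {i j : ℕ} (h : central a b i j) : central a b j i :=
  fun t ha hb hc => h t ha hb ⟨by omega, by omega⟩

lemma center_step {a b : List ℕ} {N : ℕ} {x : Matrix (Fin N) (Fin N) ℂ}
    (hc : ∀ y ∈ seaweed a b N, ⁅x, y⁆ = 0)
    (t : ℕ) (ht : t + 1 < N) (hT : ¬ ((t+1) ∈ PS a ∧ (t+1) ∈ PS b)) :
    x ⟨t, by omega⟩ ⟨t, by omega⟩ = x ⟨t+1, ht⟩ ⟨t+1, ht⟩ := by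
  have hq : t < N := by omega
  set p : Fin N := ⟨t+1, ht⟩ with hp
  set q : Fin N := ⟨t, hq⟩ with hqq
  by_cases ha : (t+1) ∈ PS a
  · have hb : (t+1) ∉ PS b := fun h => hT ⟨ha, h⟩
    have hsb : sameBlock b (q : ℕ) (p : ℕ) := by
      intro k hk hkc
      have hk1 : k = t + 1 := by
        simp only [hp, hqq] at hkc; omega
      exact hb (hk1 ▸ hk)
    have hy : Emat N q p ∈ seaweed a b N :=
      LieSubalgebra.subset_lieSpan (Or.inr ⟨q, p, by simp [hp, hqq], hsb, rfl⟩)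
    have h0 := congrFun (congrFun (hc _ hy) q) p
    rw [lie_Emat_apply, if_pos rfl, if_pos rfl] at h0
    have : x q q = x p p := by
      have := sub_eq_zero.mp h0; exact this
    exact this
  · have hsa' : sameBlock a (p : ℕ) (q : ℕ) := by
      intro k hk hkc
      have hk1 : k = t + 1 := by
        simp only [hp, hqq] at hkc; omega
      exact ha (hk1 ▸ hk)
    have hy : Emat N p q ∈ seaweed a b N :=
      LieSubalgebra.subset_lieSpan (Or.inl (Or.inr ⟨p, q, by simp [hp, hqq], hsa', rfl⟩))
    have h0 := congrFun (congrFun (hc _ hy) p) q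
    rw [lie_Emat_apply, if_pos rfl, if_pos rfl] at h0
    exact (sub_eq_zero.mp h0).symm

lemma center_const {a b : List ℕ} {N : ℕ} {x : Matrix (Fin N) (Fin N) ℂ}
    (hc : ∀ y ∈ seaweed a b N, ⁅x, y⁆ = 0) :
    ∀ i j : Fin N, central a b (i : ℕ) (j : ℕ) → x i i = x j j := by
  have aux : ∀ (d i : ℕ) (hid : i + d < N), central a b i (i + d) →
      x ⟨i, by omega⟩ ⟨i, by omega⟩ = x ⟨i + d, hid⟩ ⟨i + d, hid⟩ := by
    intro d
    induction d with
    | zero => intro i h _; rfl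
    | succ d ih =>
      intro i hid hcen
      have h1 : central a b i (i + d) := by
        intro t ha hb hc'
        exact hcen t ha hb (by omega)
      have h2 : ¬ ((i + d + 1) ∈ PS a ∧ (i + d + 1) ∈ PS b) := by
        rintro ⟨ha, hb⟩
        exact hcen _ ha hb (by omega)
      have e1 := ih i (by omega) h1
      have e2 := center_step hc (i + d) (by omega) h2
      exact e1.trans e2
  intro i j hcen
  rcases le_or_gt (i : ℕ) (j : ℕ) with h | h
  · obtain ⟨d, hd⟩ := Nat.exists_eq_add_of_le h
    have h1 : central a b (i : ℕ) ((i : ℕ) + d) := by rw [← hd]; exact hcen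
    have ej : j = ⟨(i : ℕ) + d, by omega⟩ := Fin.ext (by simpa using hd)
    rw [ej]
    exact aux d i (by omega) h1
  · obtain ⟨d, hd⟩ := Nat.exists_eq_add_of_le h.le
    have h1 : central a b (j : ℕ) ((j : ℕ) + d) := by rw [← hd]; exact central_symm hcen
    have ei : i = ⟨(j : ℕ) + d, by omega⟩ := Fin.ext (by simpa using hd)
    rw [ei]
    exact (aux d j (by omega) h1).symm

lemma center_eq (a b : List ℕ) (N : ℕ) :
    {x : Matrix (Fin N) (Fin N) ℂ | x ∈ seaweed a b N ∧ ∀ y ∈ seaweed a b N, ⁅x, y⁆ = 0} =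
      {x : Matrix (Fin N) (Fin N) ℂ | (∀ i j : Fin N, i ≠ j → x i j = 0) ∧
        ∀ i j : Fin N, central a b (i : ℕ) (j : ℕ) → x i i = x j j} := by
  ext x
  simp only [Set.mem_setOf_eq]
  constructor
  · rintro ⟨hx, hc⟩
    refine ⟨?_, center_const hc⟩
    intro i j hij
    have hy : Emat N j j ∈ seaweed a b N :=
      LieSubalgebra.subset_lieSpan (Or.inl (Or.inl ⟨j, rfl⟩))
    have h0 := congrFun (congrFun (hc _ hy) i) j
    rw [lie_Emat_apply, if_pos rfl, if_neg (fun h => hij h.symm), sub_zero] at h0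
    exact h0
  · rintro ⟨hdiag, hconst⟩
    have hxS : x ∈ SW a b N := by
      intro p q h
      exact hdiag p q (fun e => h (Or.inl e))
    refine ⟨?_, ?_⟩
    · rw [seaweed_eq_SW]; exact hxS
    · intro y hy
      rw [seaweed_eq_SW] at hy
      ext p q
      rw [Ring.lie_def, Matrix.sub_apply, Matrix.mul_apply, Matrix.mul_apply, Matrix.zero_apply]
      have e1 : ∑ r, x p r * y r q = x p p * y p q :=
        Finset.sum_eq_single_of_mem p (Finset.mem_univ p)
          (fun r _ hr => by rw [hdiag p r (Ne.symm hr), zero_mul])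
      have e2 : ∑ r, y p r * x r q = y p q * x q q :=
        Finset.sum_eq_single_of_mem q (Finset.mem_univ q)
          (fun r _ hr => by rw [hdiag r q hr, mul_zero])
      rw [e1, e2]
      by_cases h0 : y p q = 0
      · rw [h0, mul_zero, zero_mul, sub_zero]
      · have hok : ok a b p q := not_not.mp fun h => h0 (hy p q h)
        have hpq : x p p = x q q := by
          rcases hok with rfl | ⟨h1, h2⟩ | ⟨h1, h2⟩
          · rfl
          · exact hconst p q (fun t ha hb hcc => h2 t ha hcc)
          · exact hconst p q (fun t ha hb hcc => h2 t hb hcc)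
        rw [hpq]; ring


lemma PS_bounds {c : List ℕ} {N : ℕ} (hs : c.sum = N) (hp : ∀ n ∈ c, 0 < n)
    {k : ℕ} (hk : k ∈ PS c) : 1 ≤ k ∧ k ≤ N := by
  obtain ⟨j, hj1, hj2, rfl⟩ := hk
  constructor
  · have hne : c.take j ≠ [] := by
      have : (c.take j).length = j := by
        rw [List.length_take]; omega
      intro hnil
      rw [hnil] at this
      simp at this; omega
    obtain ⟨m, hm⟩ := List.exists_mem_of_ne_nil _ hne
    have hm2 : m ∈ c := List.mem_of_mem_take hm
    have h1 := hp m hm2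
    have h2 : m ≤ (c.take j).sum := List.single_le_sum (fun x _ => Nat.zero_le x) m hm
    omega
  · calc (c.take j).sum ≤ (c.take j).sum + (c.drop j).sum := Nat.le_add_right _ _
      _ = c.sum := by rw [← List.sum_append, List.take_append_drop]
      _ = N := hs

lemma N_mem_PS {c : List ℕ} {N : ℕ} (hs : c.sum = N) (hN : 0 < N) : N ∈ PS c := by
  have hne : c ≠ [] := by rintro rfl; simp at hs; omega
  exact ⟨c.length, List.length_pos_iff.mpr hne, le_refl _, by rw [List.take_length]; exact hs.symm⟩

lemma PS_finite (c : List ℕ) : (PS c).Finite := by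
  have hsub : PS c ⊆ (fun j => (c.take j).sum) '' (Set.Icc 1 c.length) := by
    rintro k ⟨j, h1, h2, rfl⟩; exact ⟨j, ⟨h1, h2⟩, rfl⟩
  exact ((Set.finite_Icc _ _).image _).subset hsub

/-- The center of a seaweed algebra `s` consists exactly of the diagonal matrices whose diagonal
entries are constant on each central interval; in particular its dimension is
`|PS(a) ∩ PS(b)|`. -/
theorem seaweed_center (a b : List ℕ) (N : ℕ)
    (hsa : a.sum = N) (hsb : b.sum = N)
    (hpa : ∀ n ∈ a, 0 < n) (hpb : ∀ n ∈ b, 0 < n) :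
    ({x : Matrix (Fin N) (Fin N) ℂ | x ∈ seaweed a b N ∧ ∀ y ∈ seaweed a b N, ⁅x, y⁆ = 0} =
      {x : Matrix (Fin N) (Fin N) ℂ | (∀ i j : Fin N, i ≠ j → x i j = 0) ∧
        ∀ i j : Fin N, central a b (i : ℕ) (j : ℕ) → x i i = x j j}) ∧
    Module.finrank ℂ (centerSub (seaweed a b N)) = (PS a ∩ PS b).ncard := by
  classical
  have hcenter := center_eq a b N
  refine ⟨hcenter, ?_⟩
  have hTfin : (PS a ∩ PS b).Finite := (PS_finite a).inter_of_left _
  have hT : ∀ k ∈ PS a ∩ PS b, 1 ≤ k ∧ k ≤ N := fun k hk => PS_bounds hsa hpa hk.1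
  have hmem : ∀ x : Matrix (Fin N) (Fin N) ℂ, x ∈ centerSub (seaweed a b N) ↔
      ((∀ i j : Fin N, i ≠ j → x i j = 0) ∧
        ∀ i j : Fin N, central a b (i : ℕ) (j : ℕ) → x i i = x j j) :=
    fun x => Iff.trans (Iff.rfl) (Set.ext_iff.mp hcenter x)
  have hNonempty : ∀ i : Fin N, ∃ t, (t ∈ PS a ∧ t ∈ PS b) ∧ (i : ℕ) + 1 ≤ t := fun i =>
    ⟨N, ⟨N_mem_PS hsa i.pos, N_mem_PS hsb i.pos⟩, i.isLt⟩
  set τ : Fin N → ℕ := fun i => Nat.find (hNonempty i) with hτ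
  have hτspec : ∀ i : Fin N, (τ i ∈ PS a ∧ τ i ∈ PS b) ∧ (i : ℕ) + 1 ≤ τ i :=
    fun i => Nat.find_spec (hNonempty i)
  have hτmin : ∀ (i : Fin N) (s : ℕ), s < τ i → ¬ ((s ∈ PS a ∧ s ∈ PS b) ∧ (i : ℕ) + 1 ≤ s) :=
    fun i s hs => Nat.find_min (hNonempty i) hs
  have hτcentral : ∀ i : Fin N, central a b (i : ℕ) (τ i - 1) := by
    intro i t ha hb hc
    have h1 := (hτspec i).2
    exact hτmin i t (by omega) ⟨⟨ha, hb⟩, by omega⟩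
  have key : ∀ i j : Fin N, (i : ℕ) ≤ (j : ℕ) → central a b (i : ℕ) (j : ℕ) → τ i = τ j := by
    intro i j hij hcen
    have h1 : τ i ≤ τ j :=
      Nat.find_le ⟨(hτspec j).1, by have := (hτspec j).2; omega⟩
    by_contra hne
    have h2 : τ i < τ j := lt_of_le_of_ne h1 hne
    have h4 : τ i ≤ (j : ℕ) := by
      by_contra h4
      have : τ j ≤ τ i := Nat.find_le ⟨(hτspec i).1, by omega⟩
      omega
    have hspec := hτspec i
    exact hcen (τ i) hspec.1.1 hspec.1.2 ⟨by omega, by omega⟩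
  set T : Set ℕ := PS a ∩ PS b with hTdef
  haveI : Fintype ↥T := hTfin.fintype
  have hidx : ∀ t : ↥T, t.1 - 1 < N := fun t => by have := hT t.1 t.2; omega
  let φ : centerSub (seaweed a b N) →ₗ[ℂ] (↥T → ℂ) :=
    { toFun := fun x t => x.1 ⟨t.1 - 1, hidx t⟩ ⟨t.1 - 1, hidx t⟩
      map_add' := fun x y => funext fun t => by simp
      map_smul' := fun c x => funext fun t => by simp }
  have hτT : ∀ i : Fin N, τ i ∈ T := fun i => (hτspec i).1
  have hτb : ∀ i : Fin N, 1 ≤ τ i ∧ τ i ≤ N := fun i => hT _ (hτT i)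
  have hinj : Function.Injective φ := by
    intro x y hxy
    refine Subtype.ext ?_
    ext p q
    have hxd := (hmem x.1).mp x.2
    have hyd := (hmem y.1).mp y.2
    rcases eq_or_ne p q with rfl | hne
    · have hb := hτb p
      have hcen : central a b (p : ℕ) (((⟨τ p - 1, by omega⟩ : Fin N)) : ℕ) := hτcentral p
      calc x.1 p p = x.1 ⟨τ p - 1, by omega⟩ ⟨τ p - 1, by omega⟩ := hxd.2 p _ hcen
        _ = φ x ⟨τ p, hτT p⟩ := rfl
        _ = φ y ⟨τ p, hτT p⟩ := by rw [hxy]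
        _ = y.1 ⟨τ p - 1, by omega⟩ ⟨τ p - 1, by omega⟩ := rfl
        _ = y.1 p p := (hyd.2 p _ hcen).symm
    · rw [hxd.1 p q hne, hyd.1 p q hne]
  have hsurj : Function.Surjective φ := by
    intro h
    set f : Fin N → ℂ := fun i => h ⟨τ i, hτT i⟩ with hf
    have hfconst : ∀ i j : Fin N, central a b (i : ℕ) (j : ℕ) → f i = f j := by
      intro i j hcen
      have hteq : τ i = τ j := by
        rcases le_total (i : ℕ) (j : ℕ) with hij | hij
        · exact key i j hij hcen
        · exact (key j i hij (central_symm hcen)).symm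
      simp only [hf]
      congr 1
      exact Subtype.ext hteq
    have hx : Matrix.diagonal f ∈ centerSub (seaweed a b N) := by
      refine (hmem _).mpr ⟨?_, ?_⟩
      · intro i j hne; exact Matrix.diagonal_apply_ne f hne
      · intro i j hcen
        rw [Matrix.diagonal_apply_eq, Matrix.diagonal_apply_eq]
        exact hfconst i j hcen
    refine ⟨⟨_, hx⟩, ?_⟩
    funext t
    show (Matrix.diagonal f) ⟨t.1 - 1, hidx t⟩ ⟨t.1 - 1, hidx t⟩ = h t
    rw [Matrix.diagonal_apply_eq]
    have hbt := hT t.1 t.2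
    have hteq : τ ⟨t.1 - 1, hidx t⟩ = t.1 := by
      have h1 : τ ⟨t.1 - 1, hidx t⟩ ≤ t.1 :=
        Nat.find_le ⟨t.2, by simp; omega⟩
      have h2 := (hτspec ⟨t.1 - 1, hidx t⟩).2
      simp at h2
      omega
    simp only [hf]
    congr 1
    exact Subtype.ext hteq
  let e : centerSub (seaweed a b N) ≃ₗ[ℂ] (↥T → ℂ) := LinearEquiv.ofBijective φ ⟨hinj, hsurj⟩
  rw [e.finrank_eq, Module.finrank_pi]
  rw [← Nat.card_coe_set_eq, Nat.card_eq_fintype_card]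
end
end

section
/- Let s be a seaweed subalgebra of gl(N,ℂ) with N ≥ 2 given by compositions a and b of N. If x = Σ c_{i,j} E_{i,j} lies in the nilradical n(s) of s, and p ≠ q are indices with both E_{p,q} ∈ s and E_{q,p} ∈ s, then c_{p,q} = c_{q,p} = 0. -/
noncomputable section

attribute [local instance 100] LieRing.ofAssociativeRing

/-- The span of all brackets `⁅x,y⁆` with `x ∈ A`, `y ∈ B`. -/
def bracketSpan {L : Type*} [LieRing L] [LieAlgebra ℂ L] (A B : Submodule ℂ L) :
    Submodule ℂ L :=
  Submodule.span ℂ {m | ∃ x ∈ A, ∃ y ∈ B, m = ⁅x, y⁆}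

/-- The lower central series of a subspace `A`: `A₀ = A`, `A_{k+1} = ⁅A, A_k⁆`. -/
def lcsS {L : Type*} [LieRing L] [LieAlgebra ℂ L] (A : Submodule ℂ L) : ℕ → Submodule ℂ L
  | 0 => A
  | k + 1 => bracketSpan A (lcsS A k)

/-- The nilradical of a Lie subalgebra `s`: the largest nilpotent ideal of `s`, realized as the
supremum of all nilpotent ideals of `s`. -/
def nilrad {L : Type*} [LieRing L] [LieAlgebra ℂ L] (s : LieSubalgebra ℂ L) : Submodule ℂ L :=
  sSup {I : Submodule ℂ L |
    I ≤ s.toSubmodule ∧ (∀ x ∈ s, ∀ y ∈ I, ⁅x, y⁆ ∈ I) ∧ ∃ k, lcsS I k = ⊥}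

namespace SWAux

variable {N : ℕ}

def chiF (p q i : Fin N) : ℂ := (if i = p then 1 else 0) - (if i = q then 1 else 0)

def hmat (p q : Fin N) : Matrix (Fin N) (Fin N) ℂ :=
  Matrix.single p p 1 - Matrix.single q q 1

lemma hmat_mul_apply (p q : Fin N) (m : Matrix (Fin N) (Fin N) ℂ) (i j : Fin N) :
    (hmat p q * m) i j = chiF p q i * m i j := by
  unfold hmat chiF
  rw [Matrix.sub_mul, Matrix.sub_apply]
  by_cases hip : i = p <;> by_cases hiq : i = q <;> subst_vars <;> simp_all

lemma mul_hmat_apply (p q : Fin N) (m : Matrix (Fin N) (Fin N) ℂ) (i j : Fin N) :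
    (m * hmat p q) i j = m i j * chiF p q j := by
  unfold hmat chiF
  rw [Matrix.mul_sub, Matrix.sub_apply]
  by_cases hjp : j = p <;> by_cases hjq : j = q <;> subst_vars <;> simp_all

lemma hmat_bracket (p q : Fin N) (m : Matrix (Fin N) (Fin N) ℂ) (i j : Fin N) :
    (⁅hmat p q, m⁆ : Matrix (Fin N) (Fin N) ℂ) i j = (chiF p q i - chiF p q j) * m i j := by
  rw [Ring.lie_def, Matrix.sub_apply, hmat_mul_apply, mul_hmat_apply]
  ring

lemma lie_e_f (p q : Fin N) :
    (⁅Emat N p q, Emat N q p⁆ : Matrix (Fin N) (Fin N) ℂ) = hmat p q := by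
  simp [Ring.lie_def, Emat, hmat, Matrix.single_mul_single_same]

lemma lie_f_e (p q : Fin N) :
    (⁅Emat N q p, Emat N p q⁆ : Matrix (Fin N) (Fin N) ℂ) = -(hmat p q) := by
  rw [← lie_skew, lie_e_f]

lemma chiF_p (p q : Fin N) (hpq : p ≠ q) : chiF p q p = 1 := by simp [chiF, hpq]
lemma chiF_q (p q : Fin N) (hpq : p ≠ q) : chiF p q q = -1 := by simp [chiF, hpq.symm]

lemma Emat_apply_ne (p q i j : Fin N) (h : ¬(i = p ∧ j = q)) : Emat N p q i j = 0 := by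
  apply Matrix.single_apply_of_ne
  tauto

lemma lie_h_e (p q : Fin N) (hpq : p ≠ q) :
    (⁅hmat p q, Emat N p q⁆ : Matrix (Fin N) (Fin N) ℂ) = (2:ℂ) • Emat N p q := by
  ext i j
  rw [hmat_bracket, Matrix.smul_apply]
  by_cases hc : i = p ∧ j = q
  · obtain ⟨hip, hjq⟩ := hc; subst hip; subst hjq
    rw [chiF_p _ _ hpq, chiF_q _ _ hpq]
    norm_num
  · rw [Emat_apply_ne _ _ _ _ hc]; simp

/-- iterated adjoint action of `hmat` implementing the polynomial `t(t-1)(t+1)(t+2)`. -/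
def adh (p q : Fin N) (m : Matrix (Fin N) (Fin N) ℂ) : Matrix (Fin N) (Fin N) ℂ :=
  ⁅hmat p q, m⁆

def t1m (p q : Fin N) (y : Matrix (Fin N) (Fin N) ℂ) := adh p q y + (2:ℂ) • y
def t2m (p q : Fin N) (y : Matrix (Fin N) (Fin N) ℂ) := adh p q (t1m p q y) + t1m p q y
def t3m (p q : Fin N) (y : Matrix (Fin N) (Fin N) ℂ) := adh p q (t2m p q y) - t2m p q y
def t4m (p q : Fin N) (y : Matrix (Fin N) (Fin N) ℂ) := adh p q (t3m p q y)

lemma t4m_apply (p q : Fin N) (y : Matrix (Fin N) (Fin N) ℂ) (i j : Fin N) :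
    t4m p q y i j =
      ((chiF p q i - chiF p q j) * ((chiF p q i - chiF p q j) - 1) *
        ((chiF p q i - chiF p q j) + 1) * ((chiF p q i - chiF p q j) + 2)) * y i j := by
  simp only [t4m, t3m, t2m, t1m, adh, hmat_bracket, Matrix.add_apply, Matrix.sub_apply,
    Matrix.smul_apply, smul_eq_mul]
  ring

lemma t4m_eq (p q : Fin N) (hpq : p ≠ q) (y : Matrix (Fin N) (Fin N) ℂ) :
    (24:ℂ)⁻¹ • t4m p q y = y p q • Emat N p q := by
  ext i j
  rw [Matrix.smul_apply, Matrix.smul_apply, t4m_apply, smul_eq_mul, smul_eq_mul]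
  by_cases hc : i = p ∧ j = q
  · obtain ⟨hip, hjq⟩ := hc; subst hip; subst hjq
    rw [chiF_p _ _ hpq, chiF_q _ _ hpq, Emat, Matrix.single_apply_same]
    norm_num
    ring
  · rw [Emat_apply_ne _ _ _ _ hc, mul_zero]
    have hz : (chiF p q i - chiF p q j) * ((chiF p q i - chiF p q j) - 1) *
        ((chiF p q i - chiF p q j) + 1) * ((chiF p q i - chiF p q j) + 2) = 0 := by
      by_cases hip : i = p <;> by_cases hiq : i = q <;> by_cases hjp : j = p <;>
        by_cases hjq : j = q <;> subst_vars <;> simp_all [chiF] <;> norm_num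
    rw [hz, zero_mul, mul_zero]

lemma key (s : LieSubalgebra ℂ (Matrix (Fin N) (Fin N) ℂ)) (p q : Fin N) (hpq : p ≠ q)
    (hp : Emat N p q ∈ s) (hq : Emat N q p ∈ s)
    (I : Submodule ℂ (Matrix (Fin N) (Fin N) ℂ))
    (hId : ∀ x ∈ s, ∀ y ∈ I, ⁅x, y⁆ ∈ I) (k : ℕ) (hk : lcsS I k = ⊥)
    (y : Matrix (Fin N) (Fin N) ℂ) (hy : y ∈ I) : y p q = 0 := by
  have hhs : hmat p q ∈ s := by rw [← lie_e_f]; exact s.lie_mem hp hq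
  have hadh : ∀ m ∈ I, adh p q m ∈ I := fun m hm => hId _ hhs m hm
  have h1 : t1m p q y ∈ I := I.add_mem (hadh y hy) (I.smul_mem _ hy)
  have h2 : t2m p q y ∈ I := I.add_mem (hadh _ h1) h1
  have h3 : t3m p q y ∈ I := I.sub_mem (hadh _ h2) h2
  have h4 : t4m p q y ∈ I := hadh _ h3
  by_contra hne
  have he : Emat N p q ∈ I := by
    have heq : Emat N p q = (y p q)⁻¹ • ((24:ℂ)⁻¹ • t4m p q y) := by
      rw [t4m_eq p q hpq y, smul_smul, inv_mul_cancel₀ hne, one_smul]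
    rw [heq]
    exact I.smul_mem _ (I.smul_mem _ h4)
  have hh : hmat p q ∈ I := by
    have hmem := hId _ hq _ he
    rw [lie_f_e] at hmem
    simpa using I.neg_mem hmem
  have hind : ∀ n, Emat N p q ∈ lcsS I n := by
    intro n
    induction n with
    | zero => exact he
    | succ n ih =>
      have heq : Emat N p q = ⁅(2:ℂ)⁻¹ • hmat p q, Emat N p q⁆ := by
        rw [smul_lie, lie_h_e p q hpq, smul_smul]
        norm_num
      show Emat N p q ∈ bracketSpan I (lcsS I n)
      exact Submodule.subset_span ⟨_, I.smul_mem _ hh, _, ih, heq⟩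
  have hbot := hind k
  rw [hk, Submodule.mem_bot] at hbot
  have : (1:ℂ) = 0 := by
    have := congrFun (congrFun hbot p) q
    simpa [Emat] using this
  exact one_ne_zero this

def entryLM (p q : Fin N) : Matrix (Fin N) (Fin N) ℂ →ₗ[ℂ] ℂ where
  toFun m := m p q
  map_add' _ _ := rfl
  map_smul' _ _ := rfl

end SWAux

/-- If `x` lies in the nilradical of a seaweed algebra `s ⊆ gl(N,ℂ)`, `N ≥ 2`, and `p ≠ q` are
indices with both `E_{p,q} ∈ s` and `E_{q,p} ∈ s`, then the `(p,q)` and `(q,p)` entries of `x`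
vanish. -/
theorem nilradical_entries_vanish (a b : List ℕ) (N : ℕ) (hN : 2 ≤ N)
    (hsa : a.sum = N) (hsb : b.sum = N)
    (hpa : ∀ n ∈ a, 0 < n) (hpb : ∀ n ∈ b, 0 < n)
    (x : Matrix (Fin N) (Fin N) ℂ) (hx : x ∈ nilrad (seaweed a b N))
    (p q : Fin N) (hpq : p ≠ q)
    (hp : Emat N p q ∈ seaweed a b N) (hq : Emat N q p ∈ seaweed a b N) :
    x p q = 0 ∧ x q p = 0 := by
  have main : ∀ p' q' : Fin N, p' ≠ q' → Emat N p' q' ∈ seaweed a b N →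
      Emat N q' p' ∈ seaweed a b N → x p' q' = 0 := by
    intro p' q' hpq' hp' hq'
    have hle : nilrad (seaweed a b N) ≤ LinearMap.ker (SWAux.entryLM p' q') := by
      apply sSup_le
      rintro I ⟨-, hId, k, hk⟩
      intro y hy
      exact LinearMap.mem_ker.mpr (SWAux.key _ p' q' hpq' hp' hq' I hId k hk y hy)
    exact LinearMap.mem_ker.mp (hle hx)
  exact ⟨main p q hpq hp hq, main q p hpq.symm hq hp⟩
end
end

section
/- Let N ≥ 2 and let x be an element of the nilradical of a seaweed subalgebra s of gl(N,ℂ). Then the diagonal part x_d of x (obtained by zeroing all off-diagonal entries) also lies in the nilradical of s, and x_d lies in the center Z(s). -/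
noncomputable section

attribute [local instance 100] LieRing.ofAssociativeRing

/-! ### Auxiliary lemmas for the proof -/

lemma Emat_ne_zero (N : ℕ) (p q : Fin N) : Emat N p q ≠ 0 := by
  intro h
  have := congrFun (congrFun h p) q
  simp [Emat] at this

lemma lie_diag_E (N : ℕ) (f : Fin N → ℂ) (p q : Fin N) :
    ⁅Matrix.diagonal f, Emat N p q⁆ = (f p - f q) • Emat N p q := by
  ext i j
  rw [Ring.lie_def]
  simp only [Matrix.sub_apply, Matrix.smul_apply, Emat, Matrix.diagonal_mul, Matrix.mul_diagonal,
    smul_eq_mul]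
  by_cases h : p = i ∧ q = j
  · obtain ⟨rfl, rfl⟩ := h; simp
  · rw [Matrix.single_apply_of_ne _ _ _ _ _ h]; ring

lemma lie_Epp_apply (N : ℕ) (p : Fin N) (y : Matrix (Fin N) (Fin N) ℂ) (i j : Fin N) :
    ⁅Emat N p p, y⁆ i j = (if i = p then y p j else 0) - (if j = p then y i p else 0) := by
  rw [Ring.lie_def]
  simp only [Matrix.sub_apply, Emat]
  congr 1
  · by_cases h : i = p
    · subst h; simp
    · simp [Matrix.single_mul_apply_of_ne, h]
  · by_cases h : j = p
    · subst h; simp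
    · simp [Matrix.mul_single_apply_of_ne, h]

lemma diag_decomp (N : ℕ) (x : Matrix (Fin N) (Fin N) ℂ) :
    Matrix.diagonal (fun i => x i i) =
      x - (2⁻¹ : ℂ) • ∑ p : Fin N, ⁅Emat N p p, ⁅Emat N p p, x⁆⁆ := by
  ext i j
  simp only [Matrix.sub_apply, Matrix.smul_apply, Matrix.sum_apply, lie_Epp_apply,
    smul_eq_mul, Matrix.diagonal_apply]
  rw [Finset.sum_sub_distrib]
  by_cases h : i = j
  · subst h
    simp [Finset.sum_ite_eq, Finset.sum_ite_eq']
  · simp [Finset.sum_ite_eq, Finset.sum_ite_eq', h, Ne.symm h]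
    ring

lemma Eii_mem (a b : List ℕ) (N : ℕ) (j : Fin N) : Emat N j j ∈ seaweed a b N :=
  LieSubalgebra.subset_lieSpan (Or.inl (Or.inl ⟨j, rfl⟩))

lemma edge_mem (a b : List ℕ) (N : ℕ) (p q : Fin N)
    (h : ((q : ℕ) < p ∧ sameBlock a p q) ∨ ((p : ℕ) < q ∧ sameBlock b p q)) :
    Emat N p q ∈ seaweed a b N := by
  apply LieSubalgebra.subset_lieSpan
  rcases h with ⟨h1, h2⟩ | ⟨h1, h2⟩
  · exact Or.inl (Or.inr ⟨p, q, h1, h2, rfl⟩)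
  · exact Or.inr ⟨p, q, h1, h2, rfl⟩

lemma diagonal_eq_sum (N : ℕ) (f : Fin N → ℂ) :
    Matrix.diagonal f = ∑ j : Fin N, f j • Emat N j j := by
  ext i i'
  simp only [Matrix.sum_apply, Matrix.smul_apply, Emat, smul_eq_mul, Matrix.diagonal_apply]
  by_cases h : i = i'
  · subst h
    rw [Finset.sum_eq_single i]
    · simp
    · intro j _ hj; rw [Matrix.single_apply_of_ne _ _ _ _ _ (by tauto)]; ring
    · intro hi; exact absurd (Finset.mem_univ i) hi
  · rw [if_neg h, Finset.sum_eq_zero]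
    intro j _
    rw [Matrix.single_apply_of_ne _ _ _ _ _ (by rintro ⟨rfl, rfl⟩; exact h rfl)]
    ring

lemma diagonal_mem_seaweed (a b : List ℕ) (N : ℕ) (f : Fin N → ℂ) :
    Matrix.diagonal f ∈ seaweed a b N := by
  rw [diagonal_eq_sum]
  exact Submodule.sum_mem (seaweed a b N).toSubmodule fun j _ =>
    Submodule.smul_mem _ _ (Eii_mem a b N j)

lemma diag_mem_ideal (a b : List ℕ) (N : ℕ) (I : Submodule ℂ (Matrix (Fin N) (Fin N) ℂ))
    (hI : ∀ y ∈ seaweed a b N, ∀ z ∈ I, ⁅y, z⁆ ∈ I)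
    (x : Matrix (Fin N) (Fin N) ℂ) (hx : x ∈ I) :
    Matrix.diagonal (fun i => x i i) ∈ I := by
  rw [diag_decomp]
  exact sub_mem hx (Submodule.smul_mem _ _ (Submodule.sum_mem _ fun p _ =>
    hI _ (Eii_mem a b N p) _ (hI _ (Eii_mem a b N p) _ hx)))

lemma ideal_edge (a b : List ℕ) (N : ℕ) (I : Submodule ℂ (Matrix (Fin N) (Fin N) ℂ))
    (hI : ∀ y ∈ seaweed a b N, ∀ z ∈ I, ⁅y, z⁆ ∈ I) (k : ℕ) (hk : lcsS I k = ⊥)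
    (x : Matrix (Fin N) (Fin N) ℂ) (hx : x ∈ I) (p q : Fin N)
    (h : ((q : ℕ) < p ∧ sameBlock a p q) ∨ ((p : ℕ) < q ∧ sameBlock b p q)) :
    x p p = x q q := by
  by_contra hne
  set f : Fin N → ℂ := fun i => x i i with hf
  have hd : Matrix.diagonal f ∈ I := diag_mem_ideal a b N I hI x hx
  have hc0 : f p - f q ≠ 0 := sub_ne_zero.mpr hne
  have hE : Emat N p q ∈ I := by
    have h1 : (-(f p - f q)) • Emat N p q ∈ I := by
      have h1 := hI _ (edge_mem a b N p q h) _ hd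
      rwa [← lie_skew, lie_diag_E, ← neg_smul] at h1
    have h2 := I.smul_mem (-(f p - f q))⁻¹ h1
    rwa [smul_smul, inv_mul_cancel₀ (neg_ne_zero.mpr hc0), one_smul] at h2
  have key : ∀ n, (f p - f q) ^ n • Emat N p q ∈ lcsS I n := by
    intro n
    induction n with
    | zero => simpa [lcsS] using hE
    | succ n ih =>
      have h3 : ⁅Matrix.diagonal f, (f p - f q) ^ n • Emat N p q⁆ ∈ lcsS I (n + 1) :=
        Submodule.subset_span ⟨_, hd, _, ih, rfl⟩
      rwa [lie_smul, lie_diag_E, smul_smul, ← pow_succ] at h3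
  have h4 := key k
  rw [hk, Submodule.mem_bot, smul_eq_zero] at h4
  rcases h4 with h4 | h4
  · rcases Nat.eq_zero_or_pos k with rfl | hkpos
    · simp at h4
    · exact hc0 (pow_eq_zero_iff hkpos.ne' |>.mp h4)
  · exact Emat_ne_zero N p q h4

/-- The submodule of matrices whose diagonal is constant along edges of the seaweed. -/
def edgeSub (a b : List ℕ) (N : ℕ) : Submodule ℂ (Matrix (Fin N) (Fin N) ℂ) where
  carrier := {M | ∀ p q : Fin N,
    (((q : ℕ) < p ∧ sameBlock a p q) ∨ ((p : ℕ) < q ∧ sameBlock b p q)) → M p p = M q q}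
  add_mem' := by
    intro M M' hM hM' p q h
    simp only [Matrix.add_apply, hM p q h, hM' p q h]
  zero_mem' := by intro p q h; simp
  smul_mem' := by
    intro r M hM p q h
    simp only [Matrix.smul_apply, hM p q h]

lemma nilrad_le_edgeSub (a b : List ℕ) (N : ℕ) :
    nilrad (seaweed a b N) ≤ edgeSub a b N := by
  apply sSup_le
  rintro I ⟨hIs, hIid, k, hk⟩ x hx p q h
  exact ideal_edge a b N I hIid k hk x hx p q h

/-- The centralizer of a matrix, as a Lie subalgebra. -/
def centralizerLie (N : ℕ) (d : Matrix (Fin N) (Fin N) ℂ) :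
    LieSubalgebra ℂ (Matrix (Fin N) (Fin N) ℂ) where
  carrier := {y | ⁅d, y⁆ = 0}
  add_mem' := by
    intro y z hy hz
    simp only [Set.mem_setOf_eq] at *
    rw [lie_add, hy, hz, add_zero]
  zero_mem' := lie_zero d
  smul_mem' := by
    intro r y hy
    simp only [Set.mem_setOf_eq] at *
    rw [lie_smul, hy, smul_zero]
  lie_mem' := by
    intro y z hy hz
    simp only [Set.mem_setOf_eq] at *
    rw [leibniz_lie, hy, hz, zero_lie, lie_zero, add_zero]

/-- If `x` lies in the nilradical of a seaweed subalgebra `s` of `gl(N,ℂ)`, `N ≥ 2`, then the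
diagonal part of `x` also lies in the nilradical of `s`, and moreover lies in the center
`Z(s)`. -/
theorem nilradical_diagonal_part (a b : List ℕ) (N : ℕ) (hN : 2 ≤ N)
    (hsa : a.sum = N) (hsb : b.sum = N)
    (hpa : ∀ n ∈ a, 0 < n) (hpb : ∀ n ∈ b, 0 < n)
    (x : Matrix (Fin N) (Fin N) ℂ) (hx : x ∈ nilrad (seaweed a b N)) :
    Matrix.diagonal (fun i => x i i) ∈ nilrad (seaweed a b N) ∧
    Matrix.diagonal (fun i => x i i) ∈ centerSub (seaweed a b N) := by
  set d : Matrix (Fin N) (Fin N) ℂ := Matrix.diagonal (fun i => x i i) with hd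
  have hxe := nilrad_le_edgeSub a b N hx
  have hds : d ∈ seaweed a b N := diagonal_mem_seaweed a b N _
  have hcomm : ∀ y ∈ seaweed a b N, ⁅d, y⁆ = 0 := by
    have hsub : seaweed a b N ≤ centralizerLie N d := by
      rw [seaweed, LieSubalgebra.lieSpan_le]
      rintro M ((⟨j, rfl⟩ | ⟨p, q, h1, h2, rfl⟩) | ⟨p, q, h1, h2, rfl⟩)
      · show ⁅d, _⁆ = 0
        rw [hd, lie_diag_E, sub_self, zero_smul]
      · show ⁅d, _⁆ = 0
        rw [hd, lie_diag_E, hxe p q (Or.inl ⟨h1, h2⟩), sub_self, zero_smul]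
      · show ⁅d, _⁆ = 0
        rw [hd, lie_diag_E, hxe p q (Or.inr ⟨h1, h2⟩), sub_self, zero_smul]
    intro y hy
    exact hsub hy
  constructor
  · have hJ : Submodule.span ℂ {d} ∈ {I : Submodule ℂ (Matrix (Fin N) (Fin N) ℂ) |
        I ≤ (seaweed a b N).toSubmodule ∧ (∀ x ∈ seaweed a b N, ∀ y ∈ I, ⁅x, y⁆ ∈ I) ∧
        ∃ k, lcsS I k = ⊥} := by
      refine ⟨?_, ?_, 1, ?_⟩
      · rw [Submodule.span_le, Set.singleton_subset_iff]
        exact hds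
      · intro y hy z hz
        rw [Submodule.mem_span_singleton] at hz
        obtain ⟨r, rfl⟩ := hz
        have : ⁅y, r • d⁆ = 0 := by
          rw [lie_smul, ← lie_skew, hcomm y hy, neg_zero, smul_zero]
        rw [this]
        exact zero_mem _
      · apply le_bot_iff.mp
        show bracketSpan _ _ ≤ ⊥
        rw [bracketSpan, Submodule.span_le]
        rintro m ⟨y, hy, z, hz, rfl⟩
        rw [Submodule.mem_span_singleton] at hy
        obtain ⟨r, rfl⟩ := hy
        have hzs : z ∈ seaweed a b N := by
          have hle : Submodule.span ℂ {d} ≤ (seaweed a b N).toSubmodule := by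
            rw [Submodule.span_le, Set.singleton_subset_iff]; exact hds
          exact hle hz
        simp [smul_lie, hcomm z hzs]
    exact le_sSup hJ (Submodule.mem_span_singleton_self d)
  · exact ⟨hds, hcomm⟩
end
end
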